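/- arXiv:1004.1596 — 2 statements merged into one kernel-verified Lean document; each statement's English description precedes it below -/
import Mathlib

section
/- Let n be a natural number and for p ∈ [0,1] let μ_p denote the product probability measure on configurations ω : Fin n → Bool in which the n coordinates are independent and each coordinate equals true with probability p. Let A ⊆ (Fin n → Bool) be increasing, i.e. if ω ∈ A and ω(i) = true implies ω'(i) = true for all i, then ω' ∈ A. For i ∈ Fin n, say that coordinate i is pivotal for A in the configuration ω if the configuration obtained from ω by setting coordinate i to true lies in A while the configuration obtained by setting coordinate i to false does not. Then for every p ∈ (0,1), the function p ↦ μ_p(A) is differentiable at p with derivative equal to the sum over i ∈ Fin n of μ_p({ω : coordinate i is pivotal for A in ω}); equivalently, (d/dp) μ_p(A) equals the expected number of pivotal coordinates under μ_p. -/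
/-- The probability of the event `A` under the product measure on `Fin n → Bool` in which the
coordinates are independent and each equals `true` with probability `p`. -/
noncomputable def bernoulliProdProb (n : ℕ) (p : ℝ) (A : Set (Fin n → Bool)) : ℝ :=
  ∑ ω : Fin n → Bool,
    A.indicator (fun ω' => ∏ i : Fin n, if ω' i = true then p else 1 - p) ω

/-- Coordinate `i` is pivotal for the event `A` in the configuration `ω`: setting coordinate
`i` to `true` puts the configuration in `A`, while setting it to `false` takes it out of `A`. -/
def Pivotal {n : ℕ} (A : Set (Fin n → Bool)) (i : Fin n) (ω : Fin n → Bool) : Prop :=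
  Function.update ω i true ∈ A ∧ Function.update ω i false ∉ A

/-- Split a sum over boolean configurations according to the value at coordinate `i`. -/
lemma sum_split_coord {M : Type*} [AddCommMonoid M] {n : ℕ} (i : Fin n)
    (g : (Fin n → Bool) → M) :
    ∑ ω : Fin n → Bool, g ω
      = ∑ ω : Fin n → Bool,
          (if ω i = true then g ω + g (Function.update ω i false) else 0) := by
  have hinv : Function.Involutive (fun ω : Fin n → Bool => Function.update ω i (!(ω i))) := by
    intro ω
    funext j
    by_cases hj : j = i
    · subst hj; simp
    · simp [Function.update_of_ne hj]
  have key : ∑ ω : Fin n → Bool, (if ω i = false then g ω else 0)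
      = ∑ ω : Fin n → Bool, (if ω i = true then g (Function.update ω i false) else 0) := by
    rw [← Equiv.sum_comp hinv.toPerm (fun ω => if ω i = false then g ω else 0)]
    refine Finset.sum_congr rfl fun ω _ => ?_
    have : (hinv.toPerm : (Fin n → Bool) → (Fin n → Bool)) ω
        = Function.update ω i (!(ω i)) := rfl
    rw [this]
    cases h : ω i <;> simp [h]
  calc ∑ ω : Fin n → Bool, g ω
      = ∑ ω : Fin n → Bool,
          ((if ω i = true then g ω else 0) + (if ω i = false then g ω else 0)) := by
        refine Finset.sum_congr rfl fun ω _ => ?_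
        cases h : ω i <;> simp [h]
    _ = (∑ ω : Fin n → Bool, (if ω i = true then g ω else 0))
        + ∑ ω : Fin n → Bool, (if ω i = false then g ω else 0) := Finset.sum_add_distrib
    _ = _ := by
        rw [key, ← Finset.sum_add_distrib]
        refine Finset.sum_congr rfl fun ω _ => ?_
        cases h : ω i <;> simp [h]

/-- The key combinatorial identity: for an increasing event `A`, the signed sum of reduced
weights over configurations in `A` equals the probability that coordinate `i` is pivotal. -/
lemma pivotal_sum (n : ℕ) (A : Set (Fin n → Bool))
    (hA : ∀ ω ∈ A, ∀ ω' : Fin n → Bool, (∀ i, ω i = true → ω' i = true) → ω' ∈ A)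
    (p : ℝ) (i : Fin n) [DecidablePred (· ∈ A)] :
    ∑ ω : Fin n → Bool,
      (if ω ∈ A then (∏ k ∈ Finset.univ.erase i, if ω k = true then p else 1 - p)
          * (if ω i = true then 1 else -1) else 0)
      = ∑ ω : Fin n → Bool,
          Set.indicator {ω | Pivotal A i ω}
            (fun ω' => ∏ j : Fin n, if ω' j = true then p else 1 - p) ω := by
  classical
  set P : (Fin n → Bool) → ℝ :=
    fun ω => ∏ k ∈ Finset.univ.erase i, if ω k = true then p else 1 - p with hP
  have hPupd : ∀ (ω : Fin n → Bool) (b : Bool), P (Function.update ω i b) = P ω := by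
    intro ω b
    refine Finset.prod_congr rfl fun k hk => ?_
    rw [Function.update_of_ne (Finset.ne_of_mem_erase hk)]
  have hW : ∀ ω : Fin n → Bool,
      (∏ j : Fin n, if ω j = true then p else 1 - p)
        = (if ω i = true then p else 1 - p) * P ω :=
    fun ω => (Finset.mul_prod_erase Finset.univ _ (Finset.mem_univ i)).symm
  rw [sum_split_coord i (fun ω => if ω ∈ A then P ω * (if ω i = true then 1 else -1) else 0),
    sum_split_coord i (fun ω => Set.indicator {ω | Pivotal A i ω}
      (fun ω' => ∏ j : Fin n, if ω' j = true then p else 1 - p) ω)]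
  refine Finset.sum_congr rfl fun ω _ => ?_
  by_cases hω : ω i = true
  · simp only [hω, if_true]
    have hupdtrue : Function.update ω i true = ω := by
      conv_lhs => rw [← hω]
      exact Function.update_eq_self i ω
    have hpiv : Pivotal A i ω ↔ (ω ∈ A ∧ Function.update ω i false ∉ A) := by
      unfold Pivotal; rw [hupdtrue]
    have hpiv' : Pivotal A i (Function.update ω i false) ↔ Pivotal A i ω := by
      unfold Pivotal; rw [Function.update_idem, Function.update_idem]
    have hfi : Function.update ω i false i = false := Function.update_self i false ω
    rw [Set.indicator_apply, Set.indicator_apply]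
    simp only [Set.mem_setOf_eq, hpiv']
    rw [hW ω, hW (Function.update ω i false), hPupd, hω, hfi]
    by_cases h1 : ω ∈ A <;> by_cases h2 : Function.update ω i false ∈ A
    · have : ¬ Pivotal A i ω := fun h => h.2 h2
      simp [h1, h2, this]
    · have : Pivotal A i ω := hpiv.mpr ⟨h1, h2⟩
      simp [h1, h2, this]; ring
    · exfalso
      refine h1 (hA _ h2 ω fun j hj => ?_)
      by_cases hji : j = i
      · subst hji; exact hω
      · rwa [Function.update_of_ne hji] at hj
    · have : ¬ Pivotal A i ω := fun h => h1 (hpiv.mp h).1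
      simp [h1, h2, this]
  · simp [hω]

/-- Margulis–Russo formula: for an increasing event `A` on `n` independent Bernoulli(`p`)
variables, `p ↦ μ_p(A)` is differentiable on `(0,1)` with derivative the expected number of
pivotal coordinates, i.e. the sum over `i` of the probability that `i` is pivotal. -/
theorem margulis_russo
    (n : ℕ) (A : Set (Fin n → Bool))
    (hA : ∀ ω ∈ A, ∀ ω' : Fin n → Bool, (∀ i, ω i = true → ω' i = true) → ω' ∈ A)
    (p : ℝ) (hp : p ∈ Set.Ioo (0 : ℝ) 1) :
    HasDerivAt (fun t => bernoulliProdProb n t A)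
      (∑ i : Fin n, bernoulliProdProb n p {ω | Pivotal A i ω}) p := by
  classical
  have hder : HasDerivAt (fun t => bernoulliProdProb n t A)
      (∑ ω : Fin n → Bool,
        A.indicator (fun ω' => ∑ j : Fin n,
          (∏ k ∈ Finset.univ.erase j, if ω' k = true then p else 1 - p)
            * (if ω' j = true then 1 else -1)) ω) p := by
    unfold bernoulliProdProb
    refine HasDerivAt.fun_sum fun ω _ => ?_
    by_cases h : ω ∈ A
    · simp only [Set.indicator_of_mem h]
      have := HasDerivAt.fun_finsetProd (u := (Finset.univ : Finset (Fin n)))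
        (f := fun j t => if ω j = true then t else 1 - t)
        (f' := fun j => if ω j = true then (1:ℝ) else -1) (x := p) ?_
      · simpa [smul_eq_mul, mul_comm] using this
      · intro j _
        by_cases hj : ω j = true
        · simpa [hj] using hasDerivAt_id' p
        · simpa [hj] using (hasDerivAt_id' p).const_sub (1:ℝ)
    · simp only [Set.indicator_of_notMem h]
      exact hasDerivAt_const p 0
  have key : (∑ ω : Fin n → Bool,
        A.indicator (fun ω' => ∑ j : Fin n,
          (∏ k ∈ Finset.univ.erase j, if ω' k = true then p else 1 - p)
            * (if ω' j = true then 1 else -1)) ω)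
      = ∑ i : Fin n, bernoulliProdProb n p {ω | Pivotal A i ω} := by
    have step1 : ∀ ω : Fin n → Bool,
        A.indicator (fun ω' => ∑ j : Fin n,
          (∏ k ∈ Finset.univ.erase j, if ω' k = true then p else 1 - p)
            * (if ω' j = true then 1 else -1)) ω
        = ∑ j : Fin n, (if ω ∈ A then
            (∏ k ∈ Finset.univ.erase j, if ω k = true then p else 1 - p)
              * (if ω j = true then 1 else -1) else 0) := by
      intro ω
      by_cases h : ω ∈ A
      · simp [Set.indicator_of_mem h, h]
      · simp [Set.indicator_of_notMem h, h]
    calc (∑ ω : Fin n → Bool, A.indicator _ ω)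
        = ∑ ω : Fin n → Bool, ∑ j : Fin n, (if ω ∈ A then
            (∏ k ∈ Finset.univ.erase j, if ω k = true then p else 1 - p)
              * (if ω j = true then 1 else -1) else 0) :=
          Finset.sum_congr rfl fun ω _ => step1 ω
      _ = ∑ j : Fin n, ∑ ω : Fin n → Bool, (if ω ∈ A then
            (∏ k ∈ Finset.univ.erase j, if ω k = true then p else 1 - p)
              * (if ω j = true then 1 else -1) else 0) := Finset.sum_comm
      _ = ∑ i : Fin n, bernoulliProdProb n p {ω | Pivotal A i ω} :=
          Finset.sum_congr rfl fun j _ => pivotal_sum n A hA p j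
  rwa [key] at hder
end

section
/- Let δ : ℝ × ℝ → ℝ be continuous on the open square (0,1) × (0,1) and strictly positive there. Let (f_n)_{n ∈ ℕ} be a sequence of functions f_n : ℝ × ℝ → ℝ, each differentiable at every point of (0,1) × (0,1), such that for every n and every (p,q) ∈ (0,1) × (0,1) the partial derivatives satisfy ∂f_n/∂p (p,q) ≥ 0 and ∂f_n/∂q (p,q) ≥ δ(p,q) · ∂f_n/∂p (p,q). Then for every (p*, q*) ∈ (0,1) × (0,1) there exist ε > 0 and κ > 0 with 0 < p* − ε, p* + ε < 1, 0 < q* − κ, q* + κ < 1, such that f_n(p* + ε, q* − κ) ≤ f_n(p* − ε, q* + κ) for every n. -/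
/-- The 'small box' step: if `δ` is continuous and strictly positive on `(0,1)²` and each
`f n` is differentiable on `(0,1)²` with `∂f_n/∂p ≥ 0` and `∂f_n/∂q ≥ δ·∂f_n/∂p`, then
around every `(p*, q*) ∈ (0,1)²` one can choose `ε, κ > 0`, uniformly in `n`, such that
`f n (p*+ε, q*−κ) ≤ f n (p*−ε, q*+κ)` for every `n`. -/
theorem small_box_comparison
    (δ : ℝ × ℝ → ℝ)
    (hδcont : ContinuousOn δ (Set.Ioo (0 : ℝ) 1 ×ˢ Set.Ioo (0 : ℝ) 1))
    (hδpos : ∀ z ∈ Set.Ioo (0 : ℝ) 1 ×ˢ Set.Ioo (0 : ℝ) 1, 0 < δ z)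
    (f : ℕ → ℝ × ℝ → ℝ)
    (hdiff : ∀ n, ∀ z ∈ Set.Ioo (0 : ℝ) 1 ×ˢ Set.Ioo (0 : ℝ) 1, DifferentiableAt ℝ (f n) z)
    (hdp : ∀ n, ∀ z ∈ Set.Ioo (0 : ℝ) 1 ×ˢ Set.Ioo (0 : ℝ) 1, 0 ≤ fderiv ℝ (f n) z (1, 0))
    (hdq : ∀ n, ∀ z ∈ Set.Ioo (0 : ℝ) 1 ×ˢ Set.Ioo (0 : ℝ) 1,
      δ z * fderiv ℝ (f n) z (1, 0) ≤ fderiv ℝ (f n) z (0, 1))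
    (p q : ℝ) (hpq : (p, q) ∈ Set.Ioo (0 : ℝ) 1 ×ˢ Set.Ioo (0 : ℝ) 1) :
    ∃ ε κ : ℝ, 0 < ε ∧ 0 < κ ∧
      0 < p - ε ∧ p + ε < 1 ∧ 0 < q - κ ∧ q + κ < 1 ∧
      ∀ n, f n (p + ε, q - κ) ≤ f n (p - ε, q + κ) := by
  obtain ⟨⟨hp0, hp1⟩, hq0, hq1⟩ := hpq
  dsimp only at hp0 hp1 hq0 hq1
  set r : ℝ := min (min p (1 - p)) (min q (1 - q)) / 2 with hr_def
  have hrpos : 0 < r := by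
    have hmin : (0:ℝ) < min (min p (1 - p)) (min q (1 - q)) :=
      lt_min (lt_min hp0 (by linarith)) (lt_min hq0 (by linarith))
    rw [hr_def]; linarith
  have hrp : r < p := by
    have h1 : min (min p (1 - p)) (min q (1 - q)) ≤ p :=
      le_trans (min_le_left _ _) (min_le_left _ _)
    simp only [hr_def]; linarith
  have hrp1 : p + r < 1 := by
    have h1 : min (min p (1 - p)) (min q (1 - q)) ≤ 1 - p :=
      le_trans (min_le_left _ _) (min_le_right _ _)
    simp only [hr_def]; linarith
  have hrq : r < q := by
    have h1 : min (min p (1 - p)) (min q (1 - q)) ≤ q :=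
      le_trans (min_le_right _ _) (min_le_left _ _)
    simp only [hr_def]; linarith
  have hrq1 : q + r < 1 := by
    have h1 : min (min p (1 - p)) (min q (1 - q)) ≤ 1 - q :=
      le_trans (min_le_right _ _) (min_le_right _ _)
    simp only [hr_def]; linarith
  set K : Set (ℝ × ℝ) := Set.Icc (p - r) (p + r) ×ˢ Set.Icc (q - r) (q + r) with hK_def
  have hKsub : K ⊆ Set.Ioo (0 : ℝ) 1 ×ˢ Set.Ioo (0 : ℝ) 1 := by
    rintro ⟨x, y⟩ ⟨⟨hx1, hx2⟩, hy1, hy2⟩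
    exact ⟨⟨by linarith, by linarith⟩, ⟨by linarith, by linarith⟩⟩
  have hKcomp : IsCompact K := (isCompact_Icc.prod isCompact_Icc)
  have hKne : K.Nonempty := ⟨(p, q), ⟨⟨by linarith, by linarith⟩, ⟨by linarith, by linarith⟩⟩⟩
  obtain ⟨z₀, hz₀K, hz₀min⟩ := hKcomp.exists_isMinOn hKne (hδcont.mono hKsub)
  have hδ₀pos : 0 < δ z₀ := hδpos z₀ (hKsub hz₀K)
  set m : ℝ := min (δ z₀) 1 with hm_def
  have hmpos : 0 < m := lt_min hδ₀pos one_pos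
  have hm1 : m ≤ 1 := min_le_right _ _
  refine ⟨r * m, r, by positivity, hrpos, ?_, ?_, by linarith, by linarith, ?_⟩
  · nlinarith
  · nlinarith
  intro n
  set ε : ℝ := r * m with hε_def
  set κ : ℝ := r with hκ_def
  have hεr : ε ≤ r := by nlinarith
  have hεpos : 0 < ε := by positivity
  -- the path
  set γ : ℝ → ℝ × ℝ := fun t => (p + ε - 2 * ε * t, q - κ + 2 * κ * t) with hγ_def
  have hγmemK : ∀ t ∈ Set.Icc (0 : ℝ) 1, γ t ∈ K := by
    rintro t ⟨ht0, ht1⟩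
    constructor
    · constructor <;> simp only [hγ_def] <;> nlinarith
    · constructor <;> simp only [hγ_def] <;> nlinarith
  have hγmem : ∀ t ∈ Set.Icc (0 : ℝ) 1, γ t ∈ Set.Ioo (0 : ℝ) 1 ×ˢ Set.Ioo (0 : ℝ) 1 :=
    fun t ht => hKsub (hγmemK t ht)
  have hγderiv : ∀ t : ℝ, HasDerivAt γ ((-(2 * ε), 2 * κ)) t := by
    intro t
    have h1 : HasDerivAt (fun t : ℝ => p + ε - 2 * ε * t) (-(2 * ε)) t := by
      simpa using ((hasDerivAt_id t).const_mul (2 * ε)).const_sub (p + ε)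
    have h2 : HasDerivAt (fun t : ℝ => q - κ + 2 * κ * t) (2 * κ) t := by
      simpa using ((hasDerivAt_id t).const_mul (2 * κ)).const_add (q - κ)
    exact h1.prodMk h2
  set g : ℝ → ℝ := fun t => f n (γ t) with hg_def
  have hgderiv : ∀ t ∈ Set.Icc (0 : ℝ) 1,
      HasDerivAt g (fderiv ℝ (f n) (γ t) (-(2 * ε), 2 * κ)) t := by
    intro t ht
    exact ((hdiff n (γ t) (hγmem t ht)).hasFDerivAt).comp_hasDerivAt t (hγderiv t)
  have hderiv_nonneg : ∀ t ∈ Set.Icc (0 : ℝ) 1,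
      0 ≤ fderiv ℝ (f n) (γ t) (-(2 * ε), 2 * κ) := by
    intro t ht
    have hz := hγmem t ht
    have h10 := hdp n (γ t) hz
    have hq' := hdq n (γ t) hz
    have hδmin : δ z₀ ≤ δ (γ t) := hz₀min (hγmemK t ht)
    have hdecomp : ((-(2 * ε), 2 * κ) : ℝ × ℝ) = (-(2 * ε)) • (1, 0) + (2 * κ) • (0, 1) := by
      simp [Prod.ext_iff]
    rw [hdecomp, map_add, map_smul, map_smul]
    simp only [smul_eq_mul]
    have hεδ : ε ≤ κ * δ (γ t) := by
      have : m ≤ δ z₀ := min_le_left _ _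
      simp only [hε_def, hκ_def]
      nlinarith
    nlinarith [mul_le_mul_of_nonneg_left hq' (by positivity : (0:ℝ) ≤ 2 * κ)]
  have hmono : MonotoneOn g (Set.Icc (0 : ℝ) 1) := by
    apply monotoneOn_of_deriv_nonneg (convex_Icc 0 1)
    · exact fun t ht => (hgderiv t ht).continuousAt.continuousWithinAt
    · intro t ht
      rw [interior_Icc] at ht
      exact ((hgderiv t ⟨le_of_lt ht.1, le_of_lt ht.2⟩).differentiableAt).differentiableWithinAt
    · intro t ht
      rw [interior_Icc] at ht
      have ht' : t ∈ Set.Icc (0 : ℝ) 1 := ⟨le_of_lt ht.1, le_of_lt ht.2⟩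
      rw [(hgderiv t ht').deriv]
      exact hderiv_nonneg t ht'
  have h01 : g 0 ≤ g 1 :=
    hmono (Set.left_mem_Icc.mpr zero_le_one) (Set.right_mem_Icc.mpr zero_le_one) zero_le_one
  have hγ0 : γ 0 = (p + ε, q - κ) := by simp [hγ_def]
  have hγ1 : γ 1 = (p - ε, q + κ) := by
    simp only [hγ_def, mul_one, Prod.mk.injEq]; constructor <;> ring
  simpa [hg_def, hγ0, hγ1] using h01
end
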